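/- Let X = ℚ ∩ [0,∞) with partial metric p(x,y) = max{x,y}. Then (X,p) is a 0-complete partial metric space that is not complete. -/

import Mathlib

open Filter Topology

structure IsPartialMetric {X : Type*} (p : X → X → ℝ) : Prop where
  nonneg : ∀ x y, 0 ≤ p x y
  symm : ∀ x y, p x y = p y x
  eq_of : ∀ x y, p x x = p x y → p y y = p x y → x = y
  self_le : ∀ x y, p x x ≤ p x y
  triangle : ∀ x y z, p x z + p y y ≤ p x y + p y z

/-- The associated metric pˢ(x,y) = 2 p(x,y) - p(x,x) - p(y,y). -/
def pS {X : Type*} (p : X → X → ℝ) (x y : X) : ℝ := 2 * p x y - p x x - p y y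

/-- 0-completeness: every 0-Cauchy sequence (lim_{n,m} p(x_n,x_m) = 0) converges
wrt pˢ to a point z with p(z,z) = 0. -/
def IsZeroCompletePMS {X : Type*} (p : X → X → ℝ) : Prop :=
  ∀ x : ℕ → X, Tendsto (fun nm : ℕ × ℕ => p (x nm.1) (x nm.2)) atTop (𝓝 0) →
    ∃ z : X, p z z = 0 ∧ Tendsto (fun n => pS p z (x n)) atTop (𝓝 0)

/-- Completeness of a partial metric space. -/
def IsCompletePMS {X : Type*} (p : X → X → ℝ) : Prop :=
  ∀ x : ℕ → X, (∃ a : ℝ, Tendsto (fun nm : ℕ × ℕ => p (x nm.1) (x nm.2)) atTop (𝓝 a)) →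
    ∃ z : X, Tendsto (fun n => pS p z (x n)) atTop (𝓝 0) ∧
      Tendsto (fun nm : ℕ × ℕ => p (x nm.1) (x nm.2)) atTop (𝓝 (p z z))

lemma aux_tri (a b c : ℚ) : max a c + b ≤ max a b + max b c := by
  rcases le_total a c with h | h
  · rw [max_eq_right h]
    linarith [le_max_right b c, le_max_right a b]
  · rw [max_eq_left h]
    linarith [le_max_left a b, le_max_left b c]

set_option maxHeartbeats 1600000 in
theorem rat_max_zero_complete_not_complete :
    let X := {q : ℚ // 0 ≤ q}
    let p : X → X → ℝ := fun x y => (max x.1 y.1 : ℚ)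
    IsPartialMetric p ∧ IsZeroCompletePMS p ∧ ¬ IsCompletePMS p := by
  intro X p
  have hatTop : (atTop : Filter (ℕ × ℕ)) = atTop ×ˢ atTop :=
    (prod_atTop_atTop_eq).symm
  have hdiag : Tendsto (fun n : ℕ => ((n, n) : ℕ × ℕ)) atTop atTop := by
    rw [hatTop]; exact tendsto_id.prodMk tendsto_id
  refine ⟨⟨?_, ?_, ?_, ?_, ?_⟩, ?_, ?_⟩
  · intro x y
    have h : (0:ℚ) ≤ max x.1 y.1 := le_trans x.2 (le_max_left _ _)
    show (0:ℝ) ≤ ((max x.1 y.1 : ℚ) : ℝ)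
    exact_mod_cast h
  · intro x y; simp [p, max_comm]
  · intro x y hx hy
    simp only [p, max_self] at hx hy
    have : (x.1 : ℝ) = (y.1 : ℝ) := by rw [hx, hy]
    exact Subtype.ext (by exact_mod_cast this)
  · intro x y
    simp only [p, max_self]
    exact_mod_cast le_max_left x.1 y.1
  · intro x y z
    simp only [p, max_self]
    exact_mod_cast aux_tri x.1 y.1 z.1
  · -- 0-complete
    intro x hx
    refine ⟨⟨0, le_refl 0⟩, show ((max (0:ℚ) 0 : ℚ) : ℝ) = 0 by norm_num, ?_⟩
    have hself : Tendsto (fun n => ((x n).1 : ℝ)) atTop (𝓝 0) := by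
      have heq : (fun n : ℕ => (((x n).1 : ℚ) : ℝ)) =
          (fun nm : ℕ × ℕ => p (x nm.1) (x nm.2)) ∘ (fun n => (n, n)) := by
        funext n
        simp [p, Function.comp, max_self]
      rw [heq]
      exact hx.comp hdiag
    have : ∀ n, pS p ⟨0, le_refl 0⟩ (x n) = ((x n).1 : ℝ) := by
      intro n
      show 2 * ((max (0:ℚ) (x n).1 : ℚ) : ℝ) - ((max (0:ℚ) 0 : ℚ) : ℝ)
          - ((max (x n).1 (x n).1 : ℚ) : ℝ) = ((x n).1 : ℝ)
      rw [max_eq_right (x n).2, max_self, max_self]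
      push_cast
      ring
    simpa only [this] using hself
  · -- not complete
    intro hcomp
    have hq : ∀ n : ℕ, ∃ q : ℚ, Real.sqrt 2 - 1/(n+1) < (q:ℝ) ∧ (q:ℝ) < Real.sqrt 2 := by
      intro n
      obtain ⟨q, hq1, hq2⟩ := exists_rat_btwn (show Real.sqrt 2 - 1/(n+1) < Real.sqrt 2 by
        have : (0:ℝ) < 1/(n+1) := by positivity
        linarith)
      exact ⟨q, hq1, hq2⟩
    choose q hq1 hq2 using hq
    have hsqrt1 : (1:ℝ) < Real.sqrt 2 := by
      have := Real.sqrt_lt_sqrt (by norm_num) (show (1:ℝ) < 2 by norm_num)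
      simpa using this
    have hqnn : ∀ n, 0 ≤ q n := by
      intro n
      have h1 : (1:ℝ)/(n+1) ≤ 1 := by
        rw [div_le_one (by positivity)]
        simp
      have : (0:ℝ) ≤ q n := by
        have := hq1 n; linarith
      exact_mod_cast this
    set x : ℕ → X := fun n => ⟨q n, hqnn n⟩ with hxdef
    have hqt : Tendsto (fun n => ((q n : ℝ))) atTop (𝓝 (Real.sqrt 2)) := by
      have hlow : Tendsto (fun n : ℕ => Real.sqrt 2 - 1/(n+1)) atTop (𝓝 (Real.sqrt 2)) := by
        have : Tendsto (fun n : ℕ => (1:ℝ)/(n+1)) atTop (𝓝 0) :=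
          tendsto_one_div_add_atTop_nhds_zero_nat
        simpa using (tendsto_const_nhds.sub this)
      exact tendsto_of_tendsto_of_tendsto_of_le_of_le hlow tendsto_const_nhds
        (fun n => (hq1 n).le) (fun n => (hq2 n).le)
    have hpt : Tendsto (fun nm : ℕ × ℕ => p (x nm.1) (x nm.2)) atTop (𝓝 (Real.sqrt 2)) := by
      have h1 : Tendsto (fun nm : ℕ × ℕ => ((q nm.1 : ℝ))) atTop (𝓝 (Real.sqrt 2)) := by
        rw [hatTop]; exact hqt.comp tendsto_fst
      have h2 : Tendsto (fun nm : ℕ × ℕ => ((q nm.2 : ℝ))) atTop (𝓝 (Real.sqrt 2)) := by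
        rw [hatTop]; exact hqt.comp tendsto_snd
      have := h1.max h2
      simp only [max_self] at this
      convert this using 2 with nm
      simp [p, x]
    obtain ⟨z, _, hz2⟩ := hcomp x ⟨Real.sqrt 2, hpt⟩
    have heq : (p z z) = Real.sqrt 2 := tendsto_nhds_unique hz2 hpt
    have : ((z.1 : ℝ)) = Real.sqrt 2 := by simpa [p] using heq
    exact irrational_sqrt_two ⟨z.1, this⟩
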